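/- The Third Lower Bound: for measure networks X, Y and p ∈ [1,∞], twice the network Gromov–Wasserstein distance satisfies 2 d_{N,p}(X,Y) ≥ inf over μ ∈ C(μ_X,μ_Y) of ‖ecc^out_{p,X,Y}‖_{L^p(μ)}, where ecc^out_{p,X,Y}(s,t) = inf over ν ∈ C(μ_X,μ_Y) of ‖ω_X(s,·) − ω_Y(t,·)‖_{L^p(ν)}. -/

import Mathlib

open MeasureTheory ENNReal

/-- The set of couplings between two measures: probability-type measures on the product
with the prescribed marginals. -/
def Coupling {X Y : Type*} [MeasurableSpace X] [MeasurableSpace Y]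
    (μX : Measure X) (μY : Measure Y) : Set (Measure (X × Y)) :=
  {μ | μ.fst = μX ∧ μ.snd = μY}

/-- The `p`-distortion of a coupling `μ` between two measure networks, namely
`‖ω_X - ω_Y‖_{L^p(μ ⊗ μ)}` (for `p = ∞` this is the essential supremum). -/
noncomputable def dis {X Y : Type*} [MeasurableSpace X] [MeasurableSpace Y]
    (ωX : X × X → ℝ) (ωY : Y × Y → ℝ) (p : ℝ≥0∞) (μ : Measure (X × Y)) : ℝ≥0∞ :=
  eLpNorm (fun q : (X × Y) × (X × Y) => ωX (q.1.1, q.2.1) - ωY (q.1.2, q.2.2)) p (μ.prod μ)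

/-- The network Gromov–Wasserstein distance: half the infimal `p`-distortion over couplings. -/
noncomputable def dN {X Y : Type*} [MeasurableSpace X] [MeasurableSpace Y]
    (ωX : X × X → ℝ) (ωY : Y × Y → ℝ) (p : ℝ≥0∞) (μX : Measure X) (μY : Measure Y) : ℝ≥0∞ :=
  (1 / 2) * ⨅ μ ∈ Coupling μX μY, dis ωX ωY p μ

/-- The `L^p` norm (with respect to `μ`) of an `ℝ≥0∞`-valued function, covering `p = ∞`
via the essential supremum. -/
noncomputable def lpNormENN {α : Type*} [MeasurableSpace α] (p : ℝ≥0∞)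
    (f : α → ℝ≥0∞) (μ : Measure α) : ℝ≥0∞ :=
  if p = ∞ then essSup f μ else (∫⁻ a, f a ^ p.toReal ∂μ) ^ (1 / p.toReal)

/-- The outgoing joint eccentricity function
`ecc^out_{p,X,Y}(s,t) = inf over couplings ν of ‖ω_X(s,·) − ω_Y(t,·)‖_{L^p(ν)}`. -/
noncomputable def eccOutJoint {X Y : Type*} [MeasurableSpace X] [MeasurableSpace Y]
    (p : ℝ≥0∞) (ωX : X × X → ℝ) (ωY : Y × Y → ℝ) (μX : Measure X) (μY : Measure Y)
    (s : X) (t : Y) : ℝ≥0∞ :=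
  ⨅ ν ∈ Coupling μX μY, eLpNorm (fun q : X × Y => ωX (s, q.1) - ωY (t, q.2)) p ν

/-- **The Third Lower Bound**: for measure networks `X`, `Y` and `p ∈ [1,∞]`,
`2 d_{N,p}(X,Y) ≥ inf over couplings μ of ‖ecc^out_{p,X,Y}‖_{L^p(μ)}`. -/
theorem third_lower_bound
    {X Y : Type*} [TopologicalSpace X] [PolishSpace X] [MeasurableSpace X] [BorelSpace X]
    [TopologicalSpace Y] [PolishSpace Y] [MeasurableSpace Y] [BorelSpace Y]
    (μX : Measure X) (μY : Measure Y) [IsProbabilityMeasure μX] [IsProbabilityMeasure μY]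
    (ωX : X × X → ℝ) (ωY : Y × Y → ℝ)
    (hωX : Measurable ωX) (hωY : Measurable ωY)
    (hbX : ∃ M, ∀ q, |ωX q| ≤ M) (hbY : ∃ M, ∀ q, |ωY q| ≤ M)
    (p : ℝ≥0∞) (hp : 1 ≤ p) :
    (⨅ μ ∈ Coupling μX μY,
        lpNormENN p (fun q : X × Y => eccOutJoint p ωX ωY μX μY q.1 q.2) μ)
      ≤ 2 * dN ωX ωY p μX μY := by
  have hp0 : p ≠ 0 := by intro h; simp [h] at hp
  have h2 : (2 : ℝ≥0∞) * dN ωX ωY p μX μY = ⨅ μ ∈ Coupling μX μY, dis ωX ωY p μ := by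
    rw [dN, ← mul_assoc]
    rw [one_div, show (2:ℝ≥0∞) * 2⁻¹ = 1 from ENNReal.mul_inv_cancel two_ne_zero ENNReal.ofNat_ne_top, one_mul]
  rw [h2]
  refine iInf_mono fun μ => iInf_mono fun hμ => ?_
  haveI hprob : IsProbabilityMeasure μ := by
    constructor
    rw [← Measure.fst_univ, hμ.1, measure_univ]
  -- pointwise bound on the eccentricity
  have hecc : ∀ q : X × Y, eccOutJoint p ωX ωY μX μY q.1 q.2 ≤
      eLpNorm (fun q' : X × Y => ωX (q.1, q'.1) - ωY (q.2, q'.2)) p μ := fun q =>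
    iInf₂_le μ hμ
  -- measurability of the integrand on the product
  have hF : Measurable fun z : (X × Y) × (X × Y) =>
      ωX (z.1.1, z.2.1) - ωY (z.1.2, z.2.2) := by
    apply Measurable.sub
    · exact hωX.comp ((measurable_fst.comp measurable_fst).prodMk
        (measurable_fst.comp measurable_snd))
    · exact hωY.comp ((measurable_snd.comp measurable_fst).prodMk
        (measurable_snd.comp measurable_snd))
  by_cases hptop : p = ∞
  · subst hptop
    simp only [lpNormENN, if_pos rfl, dis, eLpNorm_exponent_top, eLpNormEssSup]
    calc essSup (fun q : X × Y => eccOutJoint ∞ ωX ωY μX μY q.1 q.2) μ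
        ≤ essSup (fun q : X × Y =>
            essSup (fun q' : X × Y => (‖ωX (q.1, q'.1) - ωY (q.2, q'.2)‖₊ : ℝ≥0∞)) μ) μ := by
          refine essSup_mono_ae (Filter.Eventually.of_forall fun q => ?_)
          simpa [eLpNorm_exponent_top, eLpNormEssSup, enorm_eq_nnnorm] using hecc q
      _ ≤ essSup (fun z : (X × Y) × (X × Y) =>
            (‖ωX (z.1.1, z.2.1) - ωY (z.1.2, z.2.2)‖₊ : ℝ≥0∞)) (μ.prod μ) := by
          set C := essSup (fun z : (X × Y) × (X × Y) =>
            (‖ωX (z.1.1, z.2.1) - ωY (z.1.2, z.2.2)‖₊ : ℝ≥0∞)) (μ.prod μ) with hC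
          have hle : ∀ᵐ z ∂(μ.prod μ),
              (‖ωX (z.1.1, z.2.1) - ωY (z.1.2, z.2.2)‖₊ : ℝ≥0∞) ≤ C := ENNReal.ae_le_essSup _
          have hae := Measure.ae_ae_of_ae_prod hle
          refine essSup_le_of_ae_le C ?_
          filter_upwards [hae] with q hq
          exact essSup_le_of_ae_le C hq
  · have hpt : p.toReal ≠ 0 := by
      refine ENNReal.toReal_ne_zero.2 ⟨hp0, hptop⟩
    simp only [lpNormENN, if_neg hptop, dis,
      eLpNorm_eq_lintegral_rpow_enorm_toReal hp0 hptop]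
    rw [lintegral_prod _ ((hF.enorm.pow_const p.toReal).aemeasurable)]
    refine ENNReal.rpow_le_rpow ?_ (by positivity)
    refine lintegral_mono fun q => ?_
    calc eccOutJoint p ωX ωY μX μY q.1 q.2 ^ p.toReal
        ≤ (eLpNorm (fun q' : X × Y => ωX (q.1, q'.1) - ωY (q.2, q'.2)) p μ) ^ p.toReal :=
          ENNReal.rpow_le_rpow (hecc q) ENNReal.toReal_nonneg
      _ = ∫⁻ q', ‖ωX (q.1, q'.1) - ωY (q.2, q'.2)‖ₑ ^ p.toReal ∂μ := by
          rw [eLpNorm_eq_lintegral_rpow_enorm_toReal hp0 hptop, one_div,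
            ENNReal.rpow_inv_rpow hpt]
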